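/- Let T > 0, let φ : [0,T] → ℝ be continuous with φ(0) = 0, and for 0 ≤ x < 1 set K₁(x) = (π/(4T)) ∫₀^π ∫₀^π |φ(Ts/π) − φ(Tt/π)|² · P₂(x, s+t) ds dt, where P₂(x,s) = (2/π)·x(1−x)(1−x²)·[cos s/(1−2x cos s+x²)² − 4x sin² s/(1−2x cos s+x²)³]. Then lim_{x→1⁻} K₁(x) = 0. -/

import Mathlib

open MeasureTheory Filter Topology Real intervalIntegral

set_option maxHeartbeats 1000000

noncomputable section

/-- The kernel `P₂(x,s) = ∂_s P₁(x,s)`, where `P₁(x,s) = -(1-x) ∂_s P₀(x,s)` and `P₀` is the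
Poisson kernel, extended to `s ∈ [0, 2π]` by the same formula. -/
def P2 (x s : ℝ) : ℝ :=
  (2 / π) * (x * (1 - x) * (1 - x ^ 2)) *
    (Real.cos s / (1 - 2 * x * Real.cos s + x ^ 2) ^ 2 -
      4 * x * Real.sin s ^ 2 / (1 - 2 * x * Real.cos s + x ^ 2) ^ 3)

lemma P2_denom_pos {x : ℝ} (hx0 : 0 ≤ x) (hx1 : x < 1) (u : ℝ) :
    0 < 1 - 2 * x * Real.cos u + x ^ 2 := by
  have h : 0 < (1 - x) ^ 2 := pow_pos (by linarith) 2
  have h2 : 0 ≤ x * (1 - Real.cos u) :=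
    mul_nonneg hx0 (by linarith [Real.cos_le_one u])
  nlinarith

lemma P2_continuous {x : ℝ} (hx0 : 0 ≤ x) (hx1 : x < 1) : Continuous (P2 x) := by
  have hne : ∀ u : ℝ, (1 - 2 * x * Real.cos u + x ^ 2) ≠ 0 :=
    fun u => (P2_denom_pos hx0 hx1 u).ne'
  have hden : Continuous fun u : ℝ => 1 - 2 * x * Real.cos u + x ^ 2 :=
    (continuous_const.sub (continuous_const.mul Real.continuous_cos)).add continuous_const
  unfold P2
  apply Continuous.mul continuous_const
  apply Continuous.sub
  · exact Real.continuous_cos.div (hden.pow 2) (fun u => pow_ne_zero _ (hne u))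
  · exact (continuous_const.mul (Real.continuous_sin.pow 2)).div (hden.pow 3)
      (fun u => pow_ne_zero _ (hne u))

lemma P2_bound {x u : ℝ} (hx : 1/2 ≤ x) (hx1 : x < 1) (hu0 : 0 ≤ u) (hu2 : u ≤ 2*π) :
    |P2 x u| ≤ (π^3 + 2*π^5) * ((1-x)^2 / ((1-x)^2 + (min u (2*π-u))^2)^2) := by
  have hπ := Real.pi_pos
  have hx0 : (0:ℝ) < x := by linarith
  have ha' : 0 < 1 - x := by linarith
  unfold P2
  set a := 1 - x with ha_def
  have ha : 0 < a := ha'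
  set m := min u (2*π-u) with hm_def
  have hm0 : 0 ≤ m := le_min hu0 (by linarith)
  have hmπ : m ≤ π := by
    rcases le_total u π with h | h
    · exact le_trans (min_le_left _ _) h
    · exact le_trans (min_le_right _ _) (by linarith)
  have hcos_eq : Real.cos u = Real.cos m := by
    rcases le_total u (2*π - u) with h | h
    · rw [hm_def, min_eq_left h]
    · rw [hm_def, min_eq_right h, show 2*π - u = -(u - 2*π) by ring,
        Real.cos_neg, Real.cos_sub_two_pi]
  have hsin_eq : Real.sin u ^ 2 = Real.sin m ^ 2 := by
    rcases le_total u (2*π - u) with h | h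
    · rw [hm_def, min_eq_left h]
    · rw [hm_def, min_eq_right h, show 2*π - u = -(u - 2*π) by ring,
        Real.sin_neg, Real.sin_sub_two_pi]
      ring
  set Q := a^2 + m^2 with hQ_def
  have hQ : 0 < Q := by rw [hQ_def]; positivity
  have hπ2 : (0:ℝ) < π^2 := by positivity
  have hcosm : Real.cos m ≤ 1 - 2/π^2 * m^2 :=
    Real.cos_le_one_sub_mul_cos_sq (by rwa [abs_of_nonneg hm0])
  have hD_eq : 1 - 2*x*Real.cos u + x^2 = a^2 + 2*x*(1 - Real.cos m) := by
    rw [hcos_eq, ha_def]; ring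
  set D := 1 - 2*x*Real.cos u + x^2 with hD_def
  have hcosm' : π^2 * Real.cos m ≤ π^2 - 2*m^2 := by
    have h := mul_le_mul_of_nonneg_left hcosm hπ2.le
    have he : π^2 * (1 - 2/π^2*m^2) = π^2 - 2*m^2 := by field_simp
    linarith [h, he]
  have hDQ' : 2*Q ≤ π^2*D := by
    rw [hQ_def, hD_eq]
    have hπ2' : (2:ℝ) ≤ π^2 := by nlinarith [Real.pi_gt_three]
    have h3 : 0 ≤ 1 - Real.cos m := by linarith [Real.cos_le_one m]
    have hint1 : 0 ≤ (2*x-1) * (π^2*(1 - Real.cos m)) :=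
      mul_nonneg (by linarith) (mul_nonneg hπ2.le h3)
    have hint3 : 2*a^2 ≤ π^2*a^2 := by
      have := mul_le_mul_of_nonneg_right hπ2' (sq_nonneg a)
      linarith
    nlinarith [hint1, hcosm', hint3]
  have hD0 : 0 < D := by
    by_contra hcon
    push_neg at hcon
    nlinarith [mul_nonpos_of_nonneg_of_nonpos hπ2.le hcon, hQ, hDQ']
  have hsinQ : Real.sin u ^ 2 ≤ Q := by
    have h1 : Real.sin m ≤ m := Real.sin_le hm0
    have h2 : 0 ≤ Real.sin m := Real.sin_nonneg_of_nonneg_of_le_pi hm0 hmπ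
    rw [hsin_eq, hQ_def]
    nlinarith [mul_le_mul h1 h1 h2 hm0, sq_nonneg a]
  have hQD2 : 4 * Q^2 ≤ π^4 * D^2 := by
    have h := pow_le_pow_left₀ (by positivity : (0:ℝ) ≤ 2*Q) hDQ' 2
    calc 4*Q^2 = (2*Q)^2 := by ring
      _ ≤ (π^2*D)^2 := h
      _ = π^4*D^2 := by ring
  have hQD3 : 8 * Q^3 ≤ π^6 * D^3 := by
    have h := pow_le_pow_left₀ (by positivity : (0:ℝ) ≤ 2*Q) hDQ' 3
    calc 8*Q^3 = (2*Q)^3 := by ring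
      _ ≤ (π^2*D)^3 := h
      _ = π^6*D^3 := by ring
  clear_value a m Q D
  have key1 : |Real.cos u / D^2| ≤ (π^4/4) / Q^2 := by
    rw [abs_div, abs_of_pos (by positivity : (0:ℝ) < D^2),
      div_le_div_iff₀ (by positivity) (by positivity)]
    have hc : |Real.cos u| ≤ 1 := Real.abs_cos_le_one u
    have h6 := mul_le_mul_of_nonneg_right hc (sq_nonneg Q)
    linarith [h6, hQD2]
  have key2 : |4*x*Real.sin u^2 / D^3| ≤ (π^6/2) / Q^2 := by
    have hnn : 0 ≤ 4*x*Real.sin u^2 / D^3 := by positivity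
    rw [abs_of_nonneg hnn, div_le_div_iff₀ (by positivity) (by positivity)]
    have h1 : 4*x*Real.sin u^2 ≤ 4*Q := by
      have hx1' : 0 ≤ (1-x) * (4*Real.sin u^2) := mul_nonneg (by linarith) (by positivity)
      nlinarith
    have h2 := mul_le_mul_of_nonneg_right h1 (sq_nonneg Q)
    linarith [h2, hQD3]
  have hcoef : 0 ≤ 2/π * (x*a*(1-x^2)) := by
    rw [ha_def]
    apply mul_nonneg (by positivity)
    apply mul_nonneg (mul_nonneg hx0.le (by linarith))
    nlinarith
  have hQne : Q ≠ 0 := hQ.ne'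
  have hπne : π ≠ 0 := hπ.ne'
  calc |2/π * (x*a*(1-x^2)) * (Real.cos u/D^2 - 4*x*Real.sin u^2/D^3)|
      = 2/π * (x*a*(1-x^2)) * |Real.cos u/D^2 - 4*x*Real.sin u^2/D^3| := by
        rw [abs_mul, abs_of_nonneg hcoef]
    _ ≤ 2/π * (x*a*(1-x^2)) * ((π^4/4)/Q^2 + (π^6/2)/Q^2) := by
        apply mul_le_mul_of_nonneg_left _ hcoef
        calc |Real.cos u/D^2 - 4*x*Real.sin u^2/D^3|
            ≤ |Real.cos u/D^2| + |4*x*Real.sin u^2/D^3| := abs_sub _ _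
          _ ≤ _ := add_le_add key1 key2
    _ ≤ 2/π * (2*a^2) * ((π^4/4)/Q^2 + (π^6/2)/Q^2) := by
        apply mul_le_mul_of_nonneg_right _ (by positivity)
        apply mul_le_mul_of_nonneg_left _ (by positivity : (0:ℝ) ≤ 2/π)
        have hxx : x*(1+x) ≤ 2 := by
          nlinarith [mul_nonneg (by linarith : (0:ℝ) ≤ 1-x) (by linarith : (0:ℝ) ≤ 2+x)]
        have he : x*a*(1-x^2) = a^2*(x*(1+x)) := by rw [ha_def]; ring
        rw [he]
        nlinarith [mul_le_mul_of_nonneg_left hxx (sq_nonneg a)]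
    _ = (π^3 + 2*π^5) * (a^2/Q^2) := by field_simp; ring

lemma integral_bump {a : ℝ} (ha : 0 < a) (c : ℝ) :
    ∫ t in (0:ℝ)..c, a/(a^2+t^2) = Real.arctan (c/a) := by
  have h : ∀ t : ℝ, a/(a^2+t^2) = (1/a) * (1/(1+(t/a)^2)) := by
    intro t
    have h1 : a^2+t^2 ≠ 0 := by positivity
    have h2 : 1+(t/a)^2 ≠ 0 := by positivity
    field_simp
  simp_rw [h]
  rw [intervalIntegral.integral_const_mul,
    intervalIntegral.integral_comp_div (f := fun y : ℝ => 1/(1+y^2)) ha.ne',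
    integral_one_div_one_add_sq]
  simp [Real.arctan_zero, smul_eq_mul]
  field_simp

lemma integral_h_le {a : ℝ} (ha : 0 < a) :
    (∫ t in (0:ℝ)..π, (a/(a^2+t^2) + a/(a^2+(π-t)^2))) ≤ π := by
  have hc1 : Continuous fun t : ℝ => a/(a^2+t^2) :=
    continuous_const.div (continuous_const.add (continuous_pow 2)) (fun t => by positivity)
  have hc2 : Continuous fun t : ℝ => a/(a^2+(π-t)^2) :=
    continuous_const.div
      (continuous_const.add ((continuous_const.sub continuous_id).pow 2))
      (fun t => by positivity)
  rw [intervalIntegral.integral_add (hc1.intervalIntegrable _ _) (hc2.intervalIntegrable _ _)]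
  have e1 : (∫ t in (0:ℝ)..π, a/(a^2+t^2)) = Real.arctan (π/a) := integral_bump ha π
  have e2 : (∫ t in (0:ℝ)..π, a/(a^2+(π-t)^2)) = Real.arctan (π/a) := by
    have h := intervalIntegral.integral_comp_sub_left (a := (0:ℝ)) (b := π)
      (fun y : ℝ => a/(a^2+y^2)) π
    simp only [sub_self, sub_zero] at h
    rw [h, integral_bump ha π]
  rw [e1, e2]
  have := Real.arctan_lt_pi_div_two (π/a)
  linarith

lemma key_pointwise {a s t : ℝ} (ha : 0 < a) (hs : s ∈ Set.Icc 0 π) (ht : t ∈ Set.Icc 0 π) :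
    a^2 / ((a^2 + (min (s+t) (2*π-(s+t)))^2)^2)
      ≤ (a/(a^2+s^2) + a/(a^2+(π-s)^2)) * (a/(a^2+t^2) + a/(a^2+(π-t)^2)) := by
  obtain ⟨hs0, hsπ⟩ := hs
  obtain ⟨ht0, htπ⟩ := ht
  set m := min (s+t) (2*π-(s+t)) with hm
  have hm0 : 0 ≤ m := le_min (by linarith) (by linarith)
  have key : ∀ r : ℝ, 0 ≤ r → r ≤ m → a/(a^2+m^2) ≤ a/(a^2+r^2) := by
    intro r hr0 hrm
    rw [div_le_div_iff₀ (by positivity) (by positivity)]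
    have h1 : r^2 ≤ m^2 := pow_le_pow_left₀ hr0 hrm 2
    nlinarith [mul_le_mul_of_nonneg_left h1 ha.le]
  have hms : a/(a^2+m^2) ≤ a/(a^2+s^2) + a/(a^2+(π-s)^2) := by
    rcases min_cases (s+t) (2*π-(s+t)) with ⟨heq, _⟩ | ⟨heq, _⟩
    · have h1 := key s hs0 (by rw [hm, heq]; linarith)
      have h2 : 0 ≤ a/(a^2+(π-s)^2) := by positivity
      linarith
    · have h1 := key (π-s) (by linarith) (by rw [hm, heq]; linarith)
      have h2 : 0 ≤ a/(a^2+s^2) := by positivity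
      linarith
  have hmt : a/(a^2+m^2) ≤ a/(a^2+t^2) + a/(a^2+(π-t)^2) := by
    rcases min_cases (s+t) (2*π-(s+t)) with ⟨heq, _⟩ | ⟨heq, _⟩
    · have h1 := key t ht0 (by rw [hm, heq]; linarith)
      have h2 : 0 ≤ a/(a^2+(π-t)^2) := by positivity
      linarith
    · have h1 := key (π-t) (by linarith) (by rw [hm, heq]; linarith)
      have h2 : 0 ≤ a/(a^2+t^2) := by positivity
      linarith
  calc a^2/((a^2+m^2)^2) = (a/(a^2+m^2)) * (a/(a^2+m^2)) := by
        rw [div_mul_div_comm]; ring_nf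
    _ ≤ _ := mul_le_mul hms hmt (by positivity) (by positivity)

set_option maxHeartbeats 4000000 in
/-- The term
`K₁(x) = (π/(4T)) ∫₀^π ∫₀^π |φ(Ts/π) - φ(Tt/π)|² P₂(x, s+t) ds dt` tends to `0`
as `x → 1⁻` for every `φ ∈ C₀[0,T]`. -/
theorem K1_tendsto_zero (T : ℝ) (hT : 0 < T) (φ : ℝ → ℝ)
    (hφc : ContinuousOn φ (Set.Icc 0 T)) (hφ0 : φ 0 = 0) :
    Tendsto (fun x => (π / (4 * T)) *
        ∫ s in (0 : ℝ)..π, ∫ t in (0 : ℝ)..π,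
          (φ (T * s / π) - φ (T * t / π)) ^ 2 * P2 x (s + t))
      (nhdsWithin 1 (Set.Iio 1)) (𝓝 0) := by
  have hπ := Real.pi_pos
  set ψ : ℝ → ℝ := Set.IccExtend hT.le (Set.restrict (Set.Icc 0 T) φ) with hψ_def
  have hψeq : ∀ y ∈ Set.Icc (0:ℝ) T, ψ y = φ y := fun y hy => Set.IccExtend_of_mem hT.le _ hy
  have hψ0 : ψ 0 = 0 := by
    rw [hψeq 0 (Set.mem_Icc.mpr ⟨le_refl 0, hT.le⟩), hφ0]
  have hrc : Continuous (Set.restrict (Set.Icc 0 T) φ) :=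
    continuousOn_iff_continuous_restrict.mp hφc
  have hψc : Continuous ψ := hrc.Icc_extend'
  have hψuc : UniformContinuous ψ :=
    (CompactSpace.uniformContinuous_of_continuous hrc).comp
      (LipschitzWith.projIcc hT.le).uniformContinuous
  obtain ⟨M, hM⟩ : ∃ M, ∀ y, |ψ y| ≤ M := by
    obtain ⟨M, hM⟩ := (isCompact_Icc (a := (0:ℝ)) (b := T)).exists_bound_of_continuousOn hφc
    refine ⟨M, fun y => ?_⟩
    have hmem := (Set.projIcc 0 T hT.le y).2
    show |φ (Set.projIcc 0 T hT.le y : ℝ)| ≤ M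
    simpa [Real.norm_eq_abs] using hM _ hmem
  have hM0 : 0 ≤ M := le_trans (abs_nonneg _) (hM 0)
  have hcongr : ∀ x : ℝ,
      (∫ s in (0:ℝ)..π, ∫ t in (0:ℝ)..π, (φ (T*s/π) - φ (T*t/π))^2 * P2 x (s+t))
      = ∫ s in (0:ℝ)..π, ∫ t in (0:ℝ)..π, (ψ (T*s/π) - ψ (T*t/π))^2 * P2 x (s+t) := by
    intro x
    have harg : ∀ r ∈ Set.Icc (0:ℝ) π, T*r/π ∈ Set.Icc (0:ℝ) T := by
      intro r hr
      constructor
      · exact div_nonneg (mul_nonneg hT.le hr.1) hπ.le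
      · rw [div_le_iff₀ hπ]
        exact mul_le_mul_of_nonneg_left hr.2 hT.le
    apply intervalIntegral.integral_congr
    intro s hs
    rw [Set.uIcc_of_le hπ.le] at hs
    show (∫ t in (0:ℝ)..π, (φ (T*s/π) - φ (T*t/π))^2 * P2 x (s+t))
      = ∫ t in (0:ℝ)..π, (ψ (T*s/π) - ψ (T*t/π))^2 * P2 x (s+t)
    apply intervalIntegral.integral_congr
    intro t ht
    rw [Set.uIcc_of_le hπ.le] at ht
    show (φ (T*s/π) - φ (T*t/π))^2 * P2 x (s+t) = (ψ (T*s/π) - ψ (T*t/π))^2 * P2 x (s+t)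
    rw [hψeq _ (harg s hs), hψeq _ (harg t ht)]
  simp only [hcongr]
  rw [Metric.tendsto_nhdsWithin_nhds]
  intro ε hε
  set C := π^3 + 2*π^5 with hC_def
  have hC : 0 < C := by rw [hC_def]; positivity
  set ε₁ := 2*T*ε/(C*π^3) with hε₁_def
  have hε₁ : 0 < ε₁ := by rw [hε₁_def]; positivity
  obtain ⟨δ₂, hδ₂, hUC⟩ := Metric.uniformContinuous_iff.mp hψuc (Real.sqrt ε₁ / 2) (by positivity)
  set δ := π*δ₂/(2*T) with hδ_def
  have hδ : 0 < δ := by rw [hδ_def]; positivity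
  have hsmall : ∀ s ∈ Set.Icc (0:ℝ) π, ∀ t ∈ Set.Icc (0:ℝ) π,
      min (s+t) (2*π-(s+t)) ≤ δ → (ψ (T*s/π) - ψ (T*t/π))^2 ≤ ε₁ := by
    intro s hs t ht hmin
    have hη : 0 < Real.sqrt ε₁ / 2 := by positivity
    have hTδ : T*δ = δ₂/2*π := by rw [hδ_def]; field_simp
    have key : |ψ (T*s/π) - ψ (T*t/π)| ≤ 2*(Real.sqrt ε₁/2) := by
      rcases min_le_iff.mp hmin with h | h
      · have h1 : dist (T*s/π) 0 < δ₂ := by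
          rw [Real.dist_eq, sub_zero,
            abs_of_nonneg (div_nonneg (mul_nonneg hT.le hs.1) hπ.le), div_lt_iff₀ hπ]
          have hsδ : s ≤ δ := le_trans (le_add_of_nonneg_right ht.1) h
          linarith [mul_le_mul_of_nonneg_left hsδ hT.le, mul_pos hδ₂ hπ]
        have h2 : dist (T*t/π) 0 < δ₂ := by
          rw [Real.dist_eq, sub_zero,
            abs_of_nonneg (div_nonneg (mul_nonneg hT.le ht.1) hπ.le), div_lt_iff₀ hπ]
          have htδ : t ≤ δ := le_trans (le_add_of_nonneg_left hs.1) h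
          linarith [mul_le_mul_of_nonneg_left htδ hT.le, mul_pos hδ₂ hπ]
        have e1 := hUC h1
        have e2 := hUC h2
        rw [Real.dist_eq, hψ0, sub_zero] at e1 e2
        calc |ψ (T*s/π) - ψ (T*t/π)| ≤ |ψ (T*s/π)| + |ψ (T*t/π)| := abs_sub _ _
          _ ≤ 2*(Real.sqrt ε₁/2) := by linarith
      · have h1 : dist (T*s/π) (T*t/π) < δ₂ := by
          rw [Real.dist_eq, show T*s/π - T*t/π = T*(s-t)/π by ring, abs_div, abs_mul,
            abs_of_pos hT, abs_of_pos hπ, div_lt_iff₀ hπ]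
          have hst : |s - t| ≤ δ := abs_sub_le_iff.mpr
            ⟨by linarith [hs.2, ht.1, ht.2, hs.1], by linarith [hs.2, ht.1, ht.2, hs.1]⟩
          linarith [mul_le_mul_of_nonneg_left hst hT.le, mul_pos hδ₂ hπ]
        have e1 := hUC h1
        rw [Real.dist_eq] at e1
        linarith
    calc (ψ (T*s/π) - ψ (T*t/π))^2 = |ψ (T*s/π) - ψ (T*t/π)|^2 := (sq_abs _).symm
      _ ≤ (2*(Real.sqrt ε₁/2))^2 := pow_le_pow_left₀ (abs_nonneg _) key 2
      _ = ε₁ := by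
          rw [show 2*(Real.sqrt ε₁/2) = Real.sqrt ε₁ by ring]
          exact Real.sq_sqrt hε₁.le
  set a₀ := Real.sqrt (ε*T*δ^4/(4*(M+1)^2*C*π^3)) with ha₀_def
  have ha₀ : 0 < a₀ := by
    rw [ha₀_def]
    apply Real.sqrt_pos.mpr
    have h1 : 0 < ε*T*δ^4 := by positivity
    have h2 : 0 < 4*(M+1)^2*C*π^3 := by positivity
    positivity
  refine ⟨min a₀ (1/2), lt_min ha₀ (by norm_num), ?_⟩
  intro x hx hdist
  have hx1 : x < 1 := hx
  rw [Real.dist_eq] at hdist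
  have habs : 1 - x < min a₀ (1/2) := by
    rw [abs_sub_comm, abs_of_pos (by linarith : (0:ℝ) < 1 - x)] at hdist
    exact hdist
  have hax : 1 - x < a₀ := lt_of_lt_of_le habs (min_le_left _ _)
  have hxhalf : 1/2 ≤ x := by
    have := lt_of_lt_of_le habs (min_le_right _ _)
    linarith
  have hx0 : 0 < x := by linarith
  set a := 1 - x with ha_def
  have ha : 0 < a := by rw [ha_def]; linarith
  set g : ℝ → ℝ := fun r => a/(a^2+r^2) + a/(a^2+(π-r)^2) with hg_def
  have hgc : Continuous g := by
    rw [hg_def]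
    apply Continuous.add
    · exact continuous_const.div (continuous_const.add (continuous_pow 2))
        (fun r => by positivity)
    · exact continuous_const.div
        (continuous_const.add ((continuous_const.sub continuous_id).pow 2))
        (fun r => by positivity)
  have hg0 : ∀ r, 0 ≤ g r := fun r => by
    simp only [hg_def]; positivity
  set B := 4*M^2*C*a^2/δ^4 with hB_def
  have hB0 : 0 ≤ B := by rw [hB_def]; positivity
  have hψTc : Continuous fun r : ℝ => ψ (T*r/π) :=
    hψc.comp ((continuous_const.mul continuous_id).div_const π)
  have hP2c : Continuous (P2 x) := P2_continuous hx0.le hx1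
  have hFc : Continuous fun p : ℝ×ℝ => (ψ (T*p.1/π) - ψ (T*p.2/π))^2 * P2 x (p.1+p.2) := by
    apply Continuous.mul
    · exact ((hψTc.comp continuous_fst).sub (hψTc.comp continuous_snd)).pow 2
    · exact hP2c.comp (continuous_fst.add continuous_snd)
  have hpt : ∀ s ∈ Set.Icc (0:ℝ) π, ∀ t ∈ Set.Icc (0:ℝ) π,
      |(ψ (T*s/π) - ψ (T*t/π))^2 * P2 x (s+t)| ≤ ε₁*C*(g s*g t) + B := by
    intro s hs t ht
    have hu0 : 0 ≤ s + t := add_nonneg hs.1 ht.1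
    have hu2 : s + t ≤ 2*π := by linarith [hs.2, ht.2]
    have hP := P2_bound hxhalf hx1 hu0 hu2
    rw [← ha_def, ← hC_def] at hP
    have hw : 0 ≤ (ψ (T*s/π) - ψ (T*t/π))^2 := sq_nonneg _
    rw [abs_mul, abs_of_nonneg hw]
    rcases le_or_gt (min (s+t) (2*π-(s+t))) δ with hcase | hcase
    · have h1 : (ψ (T*s/π) - ψ (T*t/π))^2 ≤ ε₁ := hsmall s hs t ht hcase
      have h3 : a^2/((a^2+(min (s+t) (2*π-(s+t)))^2)^2) ≤ g s * g t := by
        simp only [hg_def]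
        exact key_pointwise ha hs ht
      have h2 : |P2 x (s+t)| ≤ C * (g s * g t) :=
        hP.trans (mul_le_mul_of_nonneg_left h3 hC.le)
      calc (ψ (T*s/π) - ψ (T*t/π))^2 * |P2 x (s+t)| ≤ ε₁ * (C * (g s * g t)) :=
            mul_le_mul h1 h2 (abs_nonneg _) hε₁.le
        _ = ε₁*C*(g s*g t) := by ring
        _ ≤ ε₁*C*(g s*g t) + B := le_add_of_nonneg_right hB0
    · have h2M : |ψ (T*s/π) - ψ (T*t/π)| ≤ 2*M := by
        calc |ψ (T*s/π) - ψ (T*t/π)| ≤ |ψ (T*s/π)| + |ψ (T*t/π)| := abs_sub _ _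
          _ ≤ 2*M := by linarith [hM (T*s/π), hM (T*t/π)]
      have h1 : (ψ (T*s/π) - ψ (T*t/π))^2 ≤ 4*M^2 := by
        calc (ψ (T*s/π) - ψ (T*t/π))^2 = |ψ (T*s/π) - ψ (T*t/π)|^2 := (sq_abs _).symm
          _ ≤ (2*M)^2 := pow_le_pow_left₀ (abs_nonneg _) h2M 2
          _ = 4*M^2 := by ring
      have h2 : |P2 x (s+t)| ≤ C * (a^2/δ^4) := by
        refine hP.trans ?_
        apply mul_le_mul_of_nonneg_left _ hC.le
        rw [div_le_div_iff₀ (by positivity) (by positivity)]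
        set m := min (s+t) (2*π-(s+t)) with hm_def
        have hδ2 : δ^2 ≤ m^2 := pow_le_pow_left₀ hδ.le hcase.le 2
        have h4 : δ^2*δ^2 ≤ m^2*m^2 :=
          mul_le_mul hδ2 hδ2 (sq_nonneg δ) (sq_nonneg m)
        have hmQ : m^2 ≤ a^2 + m^2 := le_add_of_nonneg_left (sq_nonneg a)
        have h5 : m^2*m^2 ≤ (a^2+m^2)*(a^2+m^2) :=
          mul_le_mul hmQ hmQ (sq_nonneg m) (by positivity)
        have h6 := mul_le_mul_of_nonneg_left (h4.trans h5) (sq_nonneg a)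
        nlinarith [h6]
      calc (ψ (T*s/π) - ψ (T*t/π))^2 * |P2 x (s+t)| ≤ 4*M^2 * (C*(a^2/δ^4)) :=
            mul_le_mul h1 h2 (abs_nonneg _) (by positivity)
        _ = B := by rw [hB_def]; ring
        _ ≤ ε₁*C*(g s*g t) + B := le_add_of_nonneg_left
            (mul_nonneg (mul_nonneg hε₁.le hC.le) (mul_nonneg (hg0 s) (hg0 t)))
  have hFcs : ∀ s : ℝ, Continuous fun t => (ψ (T*s/π) - ψ (T*t/π))^2 * P2 x (s+t) :=
    fun s => hFc.comp (continuous_const.prodMk continuous_id)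
  have hInner : ∀ s ∈ Set.Icc (0:ℝ) π,
      |∫ t in (0:ℝ)..π, (ψ (T*s/π) - ψ (T*t/π))^2 * P2 x (s+t)| ≤ ε₁*C*π*g s + B*π := by
    intro s hs
    have hgs0 : 0 ≤ ε₁*C*g s := mul_nonneg (mul_nonneg hε₁.le hC.le) (hg0 s)
    calc |∫ t in (0:ℝ)..π, (ψ (T*s/π) - ψ (T*t/π))^2 * P2 x (s+t)|
        ≤ ∫ t in (0:ℝ)..π, |(ψ (T*s/π) - ψ (T*t/π))^2 * P2 x (s+t)| :=
          intervalIntegral.abs_integral_le_integral_abs hπ.le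
      _ ≤ ∫ t in (0:ℝ)..π, ((ε₁*C*g s) * g t + B) := by
          apply intervalIntegral.integral_mono_on hπ.le
            ((hFcs s).abs.intervalIntegrable _ _)
            ((show Continuous fun t => (ε₁*C*g s) * g t + B from
              (continuous_const.mul hgc).add continuous_const).intervalIntegrable _ _)
          intro t ht
          exact (hpt s hs t ht).trans_eq (by ring)
      _ = (ε₁*C*g s) * (∫ t in (0:ℝ)..π, g t) + π * B := by
          rw [intervalIntegral.integral_add ((show Continuous fun t => (ε₁*C*g s) * g t from
            continuous_const.mul hgc).intervalIntegrable _ _)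
            (intervalIntegrable_const), intervalIntegral.integral_const_mul,
            intervalIntegral.integral_const, smul_eq_mul, sub_zero]
      _ ≤ ε₁*C*π*g s + B*π := by
          have hint : (∫ t in (0:ℝ)..π, g t) ≤ π := by
            simp only [hg_def]
            exact integral_h_le ha
          linarith [mul_le_mul_of_nonneg_left hint hgs0]
  have hinnerc : Continuous fun s => ∫ t in (0:ℝ)..π,
      (ψ (T*s/π) - ψ (T*t/π))^2 * P2 x (s+t) := by
    have h := intervalIntegral.continuous_parametric_intervalIntegral_of_continuous'
      (f := fun s t => (ψ (T*s/π) - ψ (T*t/π))^2 * P2 x (s+t)) (μ := volume) hFc 0 π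
    exact h
  have hOuter : |∫ s in (0:ℝ)..π, ∫ t in (0:ℝ)..π, (ψ (T*s/π) - ψ (T*t/π))^2 * P2 x (s+t)|
      ≤ ε₁*C*π*π + B*π*π := by
    calc |∫ s in (0:ℝ)..π, ∫ t in (0:ℝ)..π, (ψ (T*s/π) - ψ (T*t/π))^2 * P2 x (s+t)|
        ≤ ∫ s in (0:ℝ)..π, |∫ t in (0:ℝ)..π, (ψ (T*s/π) - ψ (T*t/π))^2 * P2 x (s+t)| :=
          intervalIntegral.abs_integral_le_integral_abs hπ.le
      _ ≤ ∫ s in (0:ℝ)..π, ((ε₁*C*π) * g s + B*π) := by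
          apply intervalIntegral.integral_mono_on hπ.le
            (hinnerc.abs.intervalIntegrable _ _)
            ((show Continuous fun s => (ε₁*C*π) * g s + B*π from
              (continuous_const.mul hgc).add continuous_const).intervalIntegrable _ _)
          intro s hs
          exact (hInner s hs).trans_eq (by ring)
      _ = (ε₁*C*π) * (∫ s in (0:ℝ)..π, g s) + π * (B*π) := by
          rw [intervalIntegral.integral_add ((show Continuous fun s => (ε₁*C*π) * g s from
            continuous_const.mul hgc).intervalIntegrable _ _)
            (intervalIntegrable_const), intervalIntegral.integral_const_mul,
            intervalIntegral.integral_const, smul_eq_mul, sub_zero]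
      _ ≤ ε₁*C*π*π + B*π*π := by
          have hint : (∫ s in (0:ℝ)..π, g s) ≤ π := by
            simp only [hg_def]
            exact integral_h_le ha
          have hcoef : 0 ≤ ε₁*C*π := by positivity
          linarith [mul_le_mul_of_nonneg_left hint hcoef]
  rw [Real.dist_eq, sub_zero]
  have e1 : π/(4*T) * (ε₁*C*π*π) = ε/2 := by
    rw [hε₁_def]; field_simp; ring
  have e2 : π/(4*T) * (B*π*π) ≤ ε/4 := by
    rw [hB_def]
    have ha2 : a^2 ≤ ε*T*δ^4/(4*(M+1)^2*C*π^3) := by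
      have h := pow_le_pow_left₀ ha.le hax.le 2
      rwa [ha₀_def, Real.sq_sqrt (by positivity)] at h
    calc π/(4*T)*(4*M^2*C*a^2/δ^4*π*π) = (M^2*C*π^3/(T*δ^4)) * a^2 := by
          field_simp
      _ ≤ (M^2*C*π^3/(T*δ^4)) * (ε*T*δ^4/(4*(M+1)^2*C*π^3)) :=
          mul_le_mul_of_nonneg_left ha2 (by positivity)
      _ = ε * (M^2/(M+1)^2) / 4 := by field_simp
      _ ≤ ε/4 := by
          have hq : M^2/(M+1)^2 ≤ 1 := by
            rw [div_le_one (by positivity)]; nlinarith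
          linarith [mul_le_mul_of_nonneg_left hq hε.le]
  calc |π/(4*T) * ∫ s in (0:ℝ)..π, ∫ t in (0:ℝ)..π,
          (ψ (T*s/π) - ψ (T*t/π))^2 * P2 x (s+t)|
      = π/(4*T) * |∫ s in (0:ℝ)..π, ∫ t in (0:ℝ)..π,
          (ψ (T*s/π) - ψ (T*t/π))^2 * P2 x (s+t)| := by
        rw [abs_mul, abs_of_pos (by positivity : (0:ℝ) < π/(4*T))]
    _ ≤ π/(4*T) * (ε₁*C*π*π + B*π*π) :=
        mul_le_mul_of_nonneg_left hOuter (by positivity)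
    _ = π/(4*T)*(ε₁*C*π*π) + π/(4*T)*(B*π*π) := by ring
    _ ≤ ε/2 + ε/4 := by rw [e1]; linarith [e2]
    _ < ε := by linarith
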